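/- Let m_1 > m_2 > 0, Ω_1, Ω_2 > 0, m_0 > 0, Ω_0 > 0, and let N ≥ 1. Let X_0, X_{1,1}, …, X_{1,N}, X_{2,1}, …, X_{2,N} be mutually independent random variables, where X_0 is Nakagami with shape m_0 and scale Ω_0, each X_{1,n} is Nakagami with shape m_1 and scale Ω_1, and each X_{2,n} is Nakagami with shape m_2 and scale Ω_2; set H = Σ_{n=1}^N X_{1,n} X_{2,n} and C = 2 (Γ(2m_2)/Γ(m_2)) (Γ(m_1 − m_2)/Γ(m_1)) (Ω_1 Ω_2)^{m_2}. Then for every s > 0, E[exp(−s (X_0 + H))] ≤ 2 (Γ(2m_0)/Γ(m_0)) Ω_0^{m_0} · C^N · s^{−2(m_0 + N m_2)}. (Upper bound on the MGF of the end-to-end channel amplitude of an IRS-assisted system with a direct link; equation (26) of the paper.) -/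

import Mathlib

open MeasureTheory ProbabilityTheory Real

/-- The density of a Nakagami-`m` random variable with shape `m` and scale `Ω`:
`f_{m,Ω}(x) = (2 Ω^m / Γ(m)) x^(2m-1) exp(-Ω x²)` for `x > 0`, and `0` otherwise. -/
noncomputable def nakagamiPDF (m Ω x : ℝ) : ℝ :=
  if 0 < x then 2 * Ω ^ m / Real.Gamma m * x ^ (2 * m - 1) * Real.exp (-Ω * x ^ 2) else 0

/-- `X` is a Nakagami-`m` random variable (shape `m`, scale `Ω`) on `(E, P)`:
its law has density `nakagamiPDF m Ω` with respect to Lebesgue measure. -/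
def IsNakagami {E : Type*} [MeasurableSpace E] (P : MeasureTheory.Measure E)
    (X : E → ℝ) (m Ω : ℝ) : Prop :=
  MeasureTheory.Measure.map X P =
    MeasureTheory.volume.withDensity (fun x => ENNReal.ofReal (nakagamiPDF m Ω x))

section Aux

lemma measurable_nakagamiPDF (m Ω : ℝ) : Measurable (nakagamiPDF m Ω) := by
  unfold nakagamiPDF
  refine Measurable.ite (measurableSet_lt measurable_const measurable_id) ?_ measurable_const
  fun_prop

lemma lintegral_nakagami_eq (m Ω : ℝ) (g : ℝ → ENNReal) :
    ∫⁻ x, ENNReal.ofReal (nakagamiPDF m Ω x) * g x ∂volume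
      = ∫⁻ x in Set.Ioi (0:ℝ),
          ENNReal.ofReal (2 * Ω ^ m / Real.Gamma m * x ^ (2 * m - 1) * Real.exp (-Ω * x ^ 2))
            * g x ∂volume := by
  rw [← lintegral_indicator measurableSet_Ioi]
  congr 1
  funext x
  by_cases hx : 0 < x
  · simp [Set.indicator, hx, nakagamiPDF]
  · simp [Set.indicator, hx, nakagamiPDF]

-- single Nakagami exponential-moment bound
lemma nak_exp_bound {m Ω t : ℝ} (hm : 0 < m) (hΩ : 0 < Ω) (ht : 0 < t) :
    ∫⁻ x, ENNReal.ofReal (nakagamiPDF m Ω x) * ENNReal.ofReal (Real.exp (-(t * x))) ∂volume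
      ≤ ENNReal.ofReal (2 * Real.Gamma (2*m) / Real.Gamma m * Ω ^ m * t ^ (-(2*m))) := by
  have hΓ : 0 < Real.Gamma m := Real.Gamma_pos_of_pos hm
  have hc : 0 ≤ 2 * Ω ^ m / Real.Gamma m := by positivity
  rw [lintegral_nakagami_eq]
  have hmono : ∫⁻ x in Set.Ioi (0:ℝ),
      ENNReal.ofReal (2 * Ω ^ m / Real.Gamma m * x ^ (2 * m - 1) * Real.exp (-Ω * x ^ 2))
        * ENNReal.ofReal (Real.exp (-(t * x))) ∂volume
      ≤ ∫⁻ x in Set.Ioi (0:ℝ),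
        ENNReal.ofReal (2 * Ω ^ m / Real.Gamma m * (x ^ (2 * m - 1) * Real.exp (-(t * x)))) ∂volume := by
    refine setLIntegral_mono' measurableSet_Ioi fun x hx => ?_
    have hx0 : (0:ℝ) < x := hx
    rw [← ENNReal.ofReal_mul (by positivity)]
    refine ENNReal.ofReal_le_ofReal ?_
    have h1 : Real.exp (-Ω * x ^ 2) ≤ 1 := by
      refine Real.exp_le_one_iff.mpr ?_
      nlinarith [sq_nonneg x]
    calc 2 * Ω ^ m / Real.Gamma m * x ^ (2 * m - 1) * Real.exp (-Ω * x ^ 2)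
          * Real.exp (-(t * x))
        ≤ 2 * Ω ^ m / Real.Gamma m * x ^ (2 * m - 1) * 1 * Real.exp (-(t * x)) := by
          have : (0:ℝ) ≤ x ^ (2*m-1) := (Real.rpow_nonneg hx0.le _)
          have he : (0:ℝ) ≤ Real.exp (-(t*x)) := (Real.exp_pos _).le
          nlinarith [mul_nonneg (mul_nonneg hc this) he, Real.exp_pos (-Ω * x^2)]
      _ = 2 * Ω ^ m / Real.Gamma m * (x ^ (2 * m - 1) * Real.exp (-(t * x))) := by ring
  refine hmono.trans ?_
  have hint : IntegrableOn (fun x : ℝ => x ^ (2*m-1) * Real.exp (-(t * x))) (Set.Ioi 0) volume := by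
    have := integrableOn_rpow_mul_exp_neg_mul_rpow (p := 1) (s := 2*m-1) (b := t)
      (by linarith) one_pos ht
    refine this.congr_fun (fun x hx => ?_) measurableSet_Ioi
    beta_reduce; rw [Real.rpow_one]; ring_nf
  have hval : ∫ x in Set.Ioi (0:ℝ), x ^ (2*m-1) * Real.exp (-(t * x)) ∂volume
      = (1/t) ^ (2*m) * Real.Gamma (2*m) := by
    have := integral_rpow_mul_exp_neg_mul_Ioi (a := 2*m) (r := t) (by linarith) ht
    simpa using this
  have heq : ∫⁻ x in Set.Ioi (0:ℝ),
      ENNReal.ofReal (2 * Ω ^ m / Real.Gamma m * (x ^ (2 * m - 1) * Real.exp (-(t * x)))) ∂volume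
      = ENNReal.ofReal (2 * Ω ^ m / Real.Gamma m * ((1/t) ^ (2*m) * Real.Gamma (2*m))) := by
    rw [← ofReal_integral_eq_lintegral_ofReal (hint.const_mul _)]
    · rw [MeasureTheory.integral_const_mul, hval]
    · filter_upwards [ae_restrict_mem measurableSet_Ioi] with x hx
      have hx0 : (0:ℝ) < x := hx
      positivity
  rw [heq]
  refine ENNReal.ofReal_le_ofReal (le_of_eq ?_)
  rw [one_div, Real.inv_rpow ht.le, ← Real.rpow_neg ht.le]
  ring

lemma nak_neg_moment_bound {m Ω c : ℝ} (hc : 0 < c) (hcm : c < m) (hΩ : 0 < Ω) :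
    ∫⁻ x, ENNReal.ofReal (nakagamiPDF m Ω x) * ENNReal.ofReal (x ^ (-(2*c))) ∂volume
      ≤ ENNReal.ofReal (Real.Gamma (m - c) / Real.Gamma m * Ω ^ c) := by
  have hm : 0 < m := hc.trans hcm
  have hΓ : 0 < Real.Gamma m := Real.Gamma_pos_of_pos hm
  rw [lintegral_nakagami_eq]
  have heq1 : ∫⁻ x in Set.Ioi (0:ℝ),
      ENNReal.ofReal (2 * Ω ^ m / Real.Gamma m * x ^ (2 * m - 1) * Real.exp (-Ω * x ^ 2))
        * ENNReal.ofReal (x ^ (-(2*c))) ∂volume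
      = ∫⁻ x in Set.Ioi (0:ℝ),
        ENNReal.ofReal (2 * Ω ^ m / Real.Gamma m
          * (x ^ (2*(m-c) - 1) * Real.exp (-Ω * x ^ (2:ℝ)))) ∂volume := by
    refine setLIntegral_congr_fun measurableSet_Ioi (fun x hx => ?_)
    have hx0 : (0:ℝ) < x := hx
    rw [← ENNReal.ofReal_mul (by positivity)]
    congr 1
    rw [show (2*(m-c) - 1 : ℝ) = (2*m-1) + (-(2*c)) by ring, Real.rpow_add hx0,
      Real.rpow_two, ← Real.rpow_natCast x 2]
    push_cast
    ring
  rw [heq1]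
  have hint : IntegrableOn (fun x : ℝ => x ^ (2*(m-c)-1) * Real.exp (-Ω * x ^ (2:ℝ)))
      (Set.Ioi 0) volume :=
    integrableOn_rpow_mul_exp_neg_mul_rpow (by linarith) two_pos hΩ
  have hval : ∫ x in Set.Ioi (0:ℝ), x ^ (2*(m-c)-1) * Real.exp (-Ω * x ^ (2:ℝ)) ∂volume
      = Ω ^ (-(m-c)) * (1/2) * Real.Gamma (m-c) := by
    have := integral_rpow_mul_exp_neg_mul_rpow (p := 2) (q := 2*(m-c)-1) (b := Ω)
      (by norm_num) (by linarith) hΩ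
    rw [this, show ((2*(m-c)-1+1)/2 : ℝ) = m - c by ring,
      show (-(2*(m-c)-1+1)/2 : ℝ) = -(m-c) by ring]
  have heq2 : ∫⁻ x in Set.Ioi (0:ℝ),
      ENNReal.ofReal (2 * Ω ^ m / Real.Gamma m
        * (x ^ (2*(m-c) - 1) * Real.exp (-Ω * x ^ (2:ℝ)))) ∂volume
      = ENNReal.ofReal (2 * Ω ^ m / Real.Gamma m * (Ω ^ (-(m-c)) * (1/2) * Real.Gamma (m-c))) := by
    rw [← ofReal_integral_eq_lintegral_ofReal (hint.const_mul _)]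
    · rw [MeasureTheory.integral_const_mul, hval]
    · filter_upwards [ae_restrict_mem measurableSet_Ioi] with x hx
      have hx0 : (0:ℝ) < x := hx
      positivity
  rw [heq2]
  refine ENNReal.ofReal_le_ofReal (le_of_eq ?_)
  have h1 : Ω ^ m * Ω ^ (-(m-c)) = Ω ^ c := by
    rw [← Real.rpow_add hΩ]; ring_nf
  have h2 : 2 * Ω ^ m / Real.Gamma m * (Ω ^ (-(m-c)) * (1/2) * Real.Gamma (m-c))
      = (Ω ^ m * Ω ^ (-(m-c))) * Real.Gamma (m-c) / Real.Gamma m := by ring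
  rw [h2, h1]; ring

/-- transfer: lintegral against a Nakagami law -/
lemma lintegral_withDensity_nak (m Ω : ℝ) {g : ℝ → ENNReal} (hg : Measurable g) :
    ∫⁻ x, g x ∂(volume.withDensity (fun x => ENNReal.ofReal (nakagamiPDF m Ω x)))
      = ∫⁻ x, ENNReal.ofReal (nakagamiPDF m Ω x) * g x ∂volume := by
  rw [lintegral_withDensity_eq_lintegral_mul _ ((measurable_nakagamiPDF m Ω).ennreal_ofReal) hg]
  rfl

/-- the Nakagami law is carried by `Ioi 0` -/
lemma nak_ae_pos (m Ω : ℝ) :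
    ∀ᵐ x ∂(volume.withDensity (fun x => ENNReal.ofReal (nakagamiPDF m Ω x))), 0 < x := by
  have hset : MeasurableSet {x : ℝ | ¬ (0 < x)} := by
    have : {x : ℝ | ¬ (0 < x)} = Set.Iic 0 := by ext x; simp
    rw [this]; exact measurableSet_Iic
  rw [ae_iff, withDensity_apply _ hset]
  calc ∫⁻ x in {x : ℝ | ¬ (0 < x)}, ENNReal.ofReal (nakagamiPDF m Ω x) ∂volume
      = ∫⁻ _x in {x : ℝ | ¬ (0 < x)}, 0 ∂volume := by
        refine setLIntegral_congr_fun hset (fun x hx => ?_)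
        have : ¬ (0 < x) := hx
        simp [nakagamiPDF, this]
    _ = 0 := by simp

lemma pair_bound {E : Type*} [MeasurableSpace E] (P : Measure E) [IsProbabilityMeasure P]
    {m₁ m₂ Ω₁ Ω₂ s : ℝ} (hm₂ : 0 < m₂) (hm₁₂ : m₂ < m₁) (hΩ₁ : 0 < Ω₁) (hΩ₂ : 0 < Ω₂)
    (hs : 0 < s) (X Y : E → ℝ) (hX : Measurable X) (hY : Measurable Y)
    (hNX : IsNakagami P X m₁ Ω₁) (hNY : IsNakagami P Y m₂ Ω₂) (hind : IndepFun X Y P) :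
    ∫⁻ ω, ENNReal.ofReal (Real.exp (-(s * (X ω * Y ω)))) ∂P
      ≤ ENNReal.ofReal ((2 * (Real.Gamma (2*m₂) / Real.Gamma m₂)
          * (Real.Gamma (m₁ - m₂) / Real.Gamma m₁) * (Ω₁ * Ω₂) ^ m₂) * s ^ (-(2*m₂))) := by
  have hΓ1 : 0 < Real.Gamma m₁ := Real.Gamma_pos_of_pos (hm₂.trans hm₁₂)
  have hΓ2 : 0 < Real.Gamma m₂ := Real.Gamma_pos_of_pos hm₂
  have hΓ12 : 0 < Real.Gamma (m₁ - m₂) := Real.Gamma_pos_of_pos (by linarith)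
  have hΓ22 : 0 < Real.Gamma (2*m₂) := Real.Gamma_pos_of_pos (by linarith)
  set K₂ : ℝ := 2 * Real.Gamma (2*m₂) / Real.Gamma m₂ * Ω₂ ^ m₂ with hK₂
  have hK₂0 : 0 ≤ K₂ := by positivity
  have hmap : Measure.map (fun ω => (X ω, Y ω)) P = (Measure.map X P).prod (Measure.map Y P) :=
    (indepFun_iff_map_prod_eq_prod_map_map hX.aemeasurable hY.aemeasurable).1 hind
  have hF : Measurable (fun p : ℝ × ℝ => ENNReal.ofReal (Real.exp (-(s * (p.1 * p.2))))) := by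
    fun_prop
  have hYprob : IsProbabilityMeasure (Measure.map Y P) := Measure.isProbabilityMeasure_map hY.aemeasurable
  have step1 : ∫⁻ ω, ENNReal.ofReal (Real.exp (-(s * (X ω * Y ω)))) ∂P
      = ∫⁻ x, ∫⁻ y, ENNReal.ofReal (Real.exp (-(s * (x * y)))) ∂(Measure.map Y P)
          ∂(Measure.map X P) := by
    rw [← MeasureTheory.lintegral_prod _ hF.aemeasurable, ← hmap,
      lintegral_map hF (hX.prodMk hY)]
  rw [step1]
  have hxpos : ∀ᵐ x ∂(Measure.map X P), 0 < x := by rw [hNX]; exact nak_ae_pos m₁ Ω₁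
  have step2 : ∫⁻ x, ∫⁻ y, ENNReal.ofReal (Real.exp (-(s * (x * y)))) ∂(Measure.map Y P)
        ∂(Measure.map X P)
      ≤ ∫⁻ x, ENNReal.ofReal (K₂ * s ^ (-(2*m₂))) * ENNReal.ofReal (x ^ (-(2*m₂)))
        ∂(Measure.map X P) := by
    refine lintegral_mono_ae ?_
    filter_upwards [hxpos] with x hx
    have hsx : 0 < s * x := by positivity
    have hinner : ∫⁻ y, ENNReal.ofReal (Real.exp (-(s * (x * y)))) ∂(Measure.map Y P)
        ≤ ENNReal.ofReal (K₂ * (s*x) ^ (-(2*m₂))) := by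
      have : (fun y => ENNReal.ofReal (Real.exp (-(s * (x * y)))))
          = fun y => ENNReal.ofReal (Real.exp (-((s*x) * y))) := by
        funext y; ring_nf
      rw [this, hNY, lintegral_withDensity_nak _ _ (by fun_prop)]
      exact (nak_exp_bound hm₂ hΩ₂ hsx).trans_eq (by rw [hK₂])
    refine hinner.trans (le_of_eq ?_)
    rw [← ENNReal.ofReal_mul (by positivity), Real.mul_rpow hs.le hx.le]
    ring_nf
  refine step2.trans ?_
  rw [lintegral_const_mul _ (by fun_prop)]
  have step3 : ∫⁻ x, ENNReal.ofReal (x ^ (-(2*m₂))) ∂(Measure.map X P)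
      ≤ ENNReal.ofReal (Real.Gamma (m₁ - m₂) / Real.Gamma m₁ * Ω₁ ^ m₂) := by
    rw [hNX, lintegral_withDensity_nak _ _ (by fun_prop)]
    exact nak_neg_moment_bound hm₂ hm₁₂ hΩ₁
  refine (mul_le_mul_right step3 _).trans (le_of_eq ?_)
  rw [← ENNReal.ofReal_mul (by positivity)]
  congr 1
  rw [Real.mul_rpow hΩ₁.le hΩ₂.le, hK₂]
  ring

lemma nak_factorization {E : Type*} [MeasurableSpace E] (P : Measure E) {N : ℕ}
    (X₀ : E → ℝ) (X₁ X₂ : Fin N → E → ℝ)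
    (hX₀ : Measurable X₀) (hX₁ : ∀ n, Measurable (X₁ n)) (hX₂ : ∀ n, Measurable (X₂ n))
    (hIndep : iIndepFun
      (fun o : Option (Fin N ⊕ Fin N) => o.elim X₀ (Sum.elim X₁ X₂)) P)
    (s : ℝ) (T : Finset (Fin N)) :
    ∫⁻ ω, ENNReal.ofReal (Real.exp (-(s * X₀ ω)))
        * ∏ n ∈ T, ENNReal.ofReal (Real.exp (-(s * (X₁ n ω * X₂ n ω)))) ∂P
      = (∫⁻ ω, ENNReal.ofReal (Real.exp (-(s * X₀ ω))) ∂P)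
        * ∏ n ∈ T, ∫⁻ ω, ENNReal.ofReal (Real.exp (-(s * (X₁ n ω * X₂ n ω)))) ∂P := by
  classical
  set f : Option (Fin N ⊕ Fin N) → E → ℝ :=
    fun o => o.elim X₀ (Sum.elim X₁ X₂) with hf_def
  have hf : ∀ i, Measurable (f i) := by
    rintro (_ | (i | i))
    · exact hX₀
    · exact hX₁ i
    · exact hX₂ i
  induction T using Finset.induction_on with
  | empty => simp
  | insert a T ha ih =>
    simp only [Finset.prod_insert ha]
    set S : Finset (Option (Fin N ⊕ Fin N)) :=
      insert none ((T.image fun n => some (Sum.inl n)) ∪ (T.image fun n => some (Sum.inr n)))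
      with hS_def
    set Tt : Finset (Option (Fin N ⊕ Fin N)) := {some (Sum.inl a), some (Sum.inr a)} with hTt_def
    have hmem1 : ∀ n : Fin N, n ∈ T → some (Sum.inl n) ∈ S := fun n hn =>
      Finset.mem_insert_of_mem (Finset.mem_union_left _ (Finset.mem_image_of_mem _ hn))
    have hmem2 : ∀ n : Fin N, n ∈ T → some (Sum.inr n) ∈ S := fun n hn =>
      Finset.mem_insert_of_mem (Finset.mem_union_right _ (Finset.mem_image_of_mem _ hn))
    have hd : Disjoint S Tt := by
      rw [Finset.disjoint_right]
      intro x hx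
      rw [hTt_def] at hx
      simp only [Finset.mem_insert, Finset.mem_singleton] at hx
      rcases hx with rfl | rfl <;>
        · simp only [hS_def, Finset.mem_insert, Finset.mem_union, Finset.mem_image]
          push_neg
          refine ⟨by simp, fun n hn => ?_, fun n hn => ?_⟩ <;>
            · intro h
              simp only [Option.some.injEq] at h
              first
                | (cases h; exact ha hn)
                | (exact Sum.inl_ne_inr h)
                | (exact Sum.inr_ne_inl h)
    have hpair := hIndep.indepFun_finset S Tt hd hf
    set φ : ((i : S) → ℝ) → ENNReal := fun v =>
      ENNReal.ofReal (Real.exp (-(s * v ⟨none, Finset.mem_insert_self _ _⟩)))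
        * ∏ n ∈ T.attach,
            ENNReal.ofReal (Real.exp (-(s * (v ⟨some (Sum.inl n.1), hmem1 n.1 n.2⟩
              * v ⟨some (Sum.inr n.1), hmem2 n.1 n.2⟩)))) with hφ_def
    set ψ : ((i : Tt) → ℝ) → ENNReal := fun v =>
      ENNReal.ofReal (Real.exp (-(s * (v ⟨some (Sum.inl a), by simp [hTt_def]⟩
        * v ⟨some (Sum.inr a), by simp [hTt_def]⟩)))) with hψ_def
    have hφ : Measurable φ := by
      apply Measurable.mul
      · fun_prop
      · exact Finset.measurable_prod _ (fun n _ => by fun_prop)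
    have hψ : Measurable ψ := by fun_prop
    have hcomp := hpair.comp hφ hψ
    have heq1 : (φ ∘ fun ω (i : S) => f i ω)
        = fun ω => ENNReal.ofReal (Real.exp (-(s * X₀ ω)))
            * ∏ n ∈ T, ENNReal.ofReal (Real.exp (-(s * (X₁ n ω * X₂ n ω)))) := by
      funext ω
      simp only [Function.comp, hφ_def]
      congr 1
      exact Finset.prod_attach T
        (fun n => ENNReal.ofReal (Real.exp (-(s * (X₁ n ω * X₂ n ω)))))
    have heq2 : (ψ ∘ fun ω (i : Tt) => f i ω)
        = fun ω => ENNReal.ofReal (Real.exp (-(s * (X₁ a ω * X₂ a ω)))) := by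
      funext ω; rfl
    rw [heq1, heq2] at hcomp
    have hGmeas : Measurable (fun ω => ENNReal.ofReal (Real.exp (-(s * X₀ ω)))
        * ∏ n ∈ T, ENNReal.ofReal (Real.exp (-(s * (X₁ n ω * X₂ n ω))))) := by
      apply Measurable.mul
      · fun_prop
      · exact Finset.measurable_prod _ (fun n _ => by fun_prop)
    have key := lintegral_mul_eq_lintegral_mul_lintegral_of_indepFun''
      hGmeas.aemeasurable (by fun_prop) hcomp
    calc ∫⁻ ω, ENNReal.ofReal (Real.exp (-(s * X₀ ω)))
          * (ENNReal.ofReal (Real.exp (-(s * (X₁ a ω * X₂ a ω))))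
            * ∏ n ∈ T, ENNReal.ofReal (Real.exp (-(s * (X₁ n ω * X₂ n ω))))) ∂P
        = ∫⁻ ω, (ENNReal.ofReal (Real.exp (-(s * X₀ ω)))
            * ∏ n ∈ T, ENNReal.ofReal (Real.exp (-(s * (X₁ n ω * X₂ n ω)))))
            * ENNReal.ofReal (Real.exp (-(s * (X₁ a ω * X₂ a ω)))) ∂P := by
          apply lintegral_congr; intro ω; ring
      _ = (∫⁻ ω, ENNReal.ofReal (Real.exp (-(s * X₀ ω)))
            * ∏ n ∈ T, ENNReal.ofReal (Real.exp (-(s * (X₁ n ω * X₂ n ω)))) ∂P)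
            * ∫⁻ ω, ENNReal.ofReal (Real.exp (-(s * (X₁ a ω * X₂ a ω)))) ∂P := key
      _ = _ := by rw [ih]; ring

end Aux

/-- Equation (26) of the paper: upper bound on the MGF of the end-to-end channel amplitude
`X₀ + H` of an IRS-assisted system with a direct link, where `H = ∑_n X_{1,n} X_{2,n}` and
`C = 2 (Γ(2m₂)/Γ(m₂)) (Γ(m₁-m₂)/Γ(m₁)) (Ω₁Ω₂)^{m₂}`: for `s > 0`,
`E[exp(-s (X₀ + H))] ≤ 2 (Γ(2m₀)/Γ(m₀)) Ω₀^{m₀} C^N s^{-2(m₀ + N m₂)}`. -/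
theorem irs_direct_link_mgf_upper_bound
    {E : Type*} [MeasurableSpace E] (P : Measure E) [IsProbabilityMeasure P]
    (m₁ m₂ Ω₁ Ω₂ m₀ Ω₀ : ℝ) (hm₂ : 0 < m₂) (hm₁₂ : m₂ < m₁) (hΩ₁ : 0 < Ω₁) (hΩ₂ : 0 < Ω₂)
    (hm₀ : 0 < m₀) (hΩ₀ : 0 < Ω₀)
    (N : ℕ) (hN : 0 < N)
    (X₀ : E → ℝ) (X₁ X₂ : Fin N → E → ℝ)
    (hX₀ : Measurable X₀)
    (hX₁ : ∀ n, Measurable (X₁ n)) (hX₂ : ∀ n, Measurable (X₂ n))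
    (hNak₀ : IsNakagami P X₀ m₀ Ω₀)
    (hNak₁ : ∀ n, IsNakagami P (X₁ n) m₁ Ω₁) (hNak₂ : ∀ n, IsNakagami P (X₂ n) m₂ Ω₂)
    (hIndep : iIndepFun
      (fun o : Option (Fin N ⊕ Fin N) => o.elim X₀ (Sum.elim X₁ X₂)) P)
    (C : ℝ) (hC : C = 2 * (Real.Gamma (2 * m₂) / Real.Gamma m₂) *
      (Real.Gamma (m₁ - m₂) / Real.Gamma m₁) * (Ω₁ * Ω₂) ^ m₂)
    (s : ℝ) (hs : 0 < s) :
    ∫ ω, Real.exp (-s * (X₀ ω + ∑ n, X₁ n ω * X₂ n ω)) ∂P ≤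
      2 * (Real.Gamma (2 * m₀) / Real.Gamma m₀) * Ω₀ ^ m₀ * C ^ N *
        s ^ (-(2 * (m₀ + N * m₂))) := by
  have hΓ₀ : 0 < Real.Gamma m₀ := Real.Gamma_pos_of_pos hm₀
  have hΓ₀2 : 0 < Real.Gamma (2 * m₀) := Real.Gamma_pos_of_pos (by linarith)
  have hΓ₁ : 0 < Real.Gamma m₁ := Real.Gamma_pos_of_pos (hm₂.trans hm₁₂)
  have hΓ₂ : 0 < Real.Gamma m₂ := Real.Gamma_pos_of_pos hm₂
  have hΓ₁₂ : 0 < Real.Gamma (m₁ - m₂) := Real.Gamma_pos_of_pos (by linarith)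
  have hΓ₂2 : 0 < Real.Gamma (2 * m₂) := Real.Gamma_pos_of_pos (by linarith)
  have hCpos : 0 < C := by rw [hC]; positivity
  have hmeasSum : Measurable fun ω => X₀ ω + ∑ n, X₁ n ω * X₂ n ω :=
    hX₀.add (Finset.measurable_sum _ fun n _ => (hX₁ n).mul (hX₂ n))
  rw [MeasureTheory.integral_eq_lintegral_of_nonneg_ae
    (Filter.Eventually.of_forall fun ω => (Real.exp_pos _).le)
    ((Real.measurable_exp.comp (hmeasSum.const_mul (-s))).aestronglyMeasurable)]
  -- split the exponential into a product
  have hsplit : ∀ ω, ENNReal.ofReal (Real.exp (-s * (X₀ ω + ∑ n, X₁ n ω * X₂ n ω)))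
      = ENNReal.ofReal (Real.exp (-(s * X₀ ω)))
        * ∏ n, ENNReal.ofReal (Real.exp (-(s * (X₁ n ω * X₂ n ω)))) := by
    intro ω
    rw [← ENNReal.ofReal_prod_of_nonneg (fun i _ => (Real.exp_pos _).le),
      ← Real.exp_sum, ← ENNReal.ofReal_mul (Real.exp_pos _).le, ← Real.exp_add]
    congr 2
    have h1 : ∑ n, -(s * (X₁ n ω * X₂ n ω)) = -(s * ∑ n, X₁ n ω * X₂ n ω) := by
      rw [Finset.mul_sum, Finset.sum_neg_distrib]
    rw [h1]; ring
  rw [lintegral_congr hsplit,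
    nak_factorization P X₀ X₁ X₂ hX₀ hX₁ hX₂ hIndep s Finset.univ]
  -- bound each factor
  have hmap₀ : Measure.map X₀ P
      = volume.withDensity (fun x => ENNReal.ofReal (nakagamiPDF m₀ Ω₀ x)) := hNak₀
  have h0 : ∫⁻ ω, ENNReal.ofReal (Real.exp (-(s * X₀ ω))) ∂P
      ≤ ENNReal.ofReal (2 * Real.Gamma (2*m₀) / Real.Gamma m₀ * Ω₀ ^ m₀ * s ^ (-(2*m₀))) := by
    have e1 : ∫⁻ ω, ENNReal.ofReal (Real.exp (-(s * X₀ ω))) ∂P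
        = ∫⁻ x, ENNReal.ofReal (Real.exp (-(s * x))) ∂(Measure.map X₀ P) :=
      (lintegral_map (f := fun x : ℝ => ENNReal.ofReal (Real.exp (-(s * x))))
        (by fun_prop) hX₀).symm
    rw [e1, hmap₀, lintegral_withDensity_nak _ _ (by fun_prop)]
    exact nak_exp_bound hm₀ hΩ₀ hs
  have h1 : ∀ n : Fin N, ∫⁻ ω, ENNReal.ofReal (Real.exp (-(s * (X₁ n ω * X₂ n ω)))) ∂P
      ≤ ENNReal.ofReal (C * s ^ (-(2*m₂))) := by
    intro n
    have hind : IndepFun (X₁ n) (X₂ n) P :=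
      hIndep.indepFun (i := some (Sum.inl n)) (j := some (Sum.inr n)) (by simp)
    have := pair_bound P hm₂ hm₁₂ hΩ₁ hΩ₂ hs (X₁ n) (X₂ n) (hX₁ n) (hX₂ n)
      (hNak₁ n) (hNak₂ n) hind
    rwa [← hC] at this
  have hbound : (∫⁻ ω, ENNReal.ofReal (Real.exp (-(s * X₀ ω))) ∂P)
      * ∏ n : Fin N, ∫⁻ ω, ENNReal.ofReal (Real.exp (-(s * (X₁ n ω * X₂ n ω)))) ∂P
      ≤ ENNReal.ofReal ((2 * Real.Gamma (2*m₀) / Real.Gamma m₀ * Ω₀ ^ m₀ * s ^ (-(2*m₀)))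
          * (C * s ^ (-(2*m₂))) ^ N) := by
    calc _ ≤ ENNReal.ofReal (2 * Real.Gamma (2*m₀) / Real.Gamma m₀ * Ω₀ ^ m₀ * s ^ (-(2*m₀)))
        * ∏ _n : Fin N, ENNReal.ofReal (C * s ^ (-(2*m₂))) :=
          mul_le_mul' h0 (Finset.prod_le_prod' fun n _ => h1 n)
      _ = _ := by
          rw [Finset.prod_const, Finset.card_univ, Fintype.card_fin,
            ← ENNReal.ofReal_pow (by positivity), ← ENNReal.ofReal_mul (by positivity)]
  refine le_trans (ENNReal.toReal_mono ENNReal.ofReal_ne_top hbound) ?_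
  rw [ENNReal.toReal_ofReal (by positivity)]
  -- real arithmetic
  have hsum : s ^ (-(2*m₀)) * s ^ ((-(2*m₂)) * (N:ℝ)) = s ^ (-(2 * (m₀ + N * m₂))) := by
    rw [← Real.rpow_add hs]; congr 1; push_cast; ring
  rw [mul_pow, ← Real.rpow_natCast (s ^ (-(2*m₂))) N, ← Real.rpow_mul hs.le, ← hsum]
  ring_nf
  rfl
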